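/- Let ψ ∈ Ω be continuously differentiable on (0,∞) with ψ(t) = ∫₀^t ψ'(s) ds for all t ≥ 0, and assume ψ' ∈ L^p((0,∞)) for every p > 1 and ψ' ∉ L¹((0,∞)). Let (X,μ) be a σ-finite measure space and let f : X → [0,∞) be measurable and essentially bounded with K := sup_{p>1} ‖f‖_{L^p(μ)}/ψ(e^{1/(p-1)}) < ∞. Then, with the convention e^{-1/(u·f(x))} := 0 when f(x) = 0, sup_{λ>0} (1/ψ(λ)) ∫₀^λ (∫_X e^{-1/(u·f(x))} dμ(x)) du/u² < ∞. -/

import Mathlib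

open Filter Set Topology MeasureTheory
open scoped ENNReal NNReal


lemma sq_le_exp' {x : ℝ} (hx : 0 ≤ x) : x ^ 2 ≤ Real.exp x := by
  have h := Real.add_one_le_exp (x / 4)
  have h4 : Real.exp (x / 4) ^ (4 : ℕ) = Real.exp x := by
    rw [← Real.exp_nat_mul]; ring_nf
  have hle : (x / 4 + 1) ^ (4 : ℕ) ≤ Real.exp (x / 4) ^ (4 : ℕ) := by
    apply pow_le_pow_left₀ (by positivity) h
  rw [h4] at hle
  nlinarith [sq_nonneg (x / 4 - 1), sq_nonneg x]

-- exp(-x) ≤ 1/x² for x>0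
lemma exp_neg_le_inv_sq {x : ℝ} (hx : 0 < x) : Real.exp (-x) ≤ x⁻¹ ^ 2 := by
  rw [Real.exp_neg]
  have h := sq_le_exp' hx.le
  rw [inv_pow]
  exact inv_anti₀ (by positivity) h

lemma lint_u {c lam : ℝ} (hc : 0 < c) (hlam : 0 < lam) :
    (∫⁻ u in Set.Ioc (0:ℝ) lam, ENNReal.ofReal (Real.exp (-(1/(u*c))) / u^2))
      = ENNReal.ofReal (c * Real.exp (-(1/(lam*c)))) := by
  set F : ℝ → ℝ := fun u => if u ≤ 0 then 0 else c * Real.exp (-(1/(u*c))) with hF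
  set h : ℝ → ℝ := fun u => if u ≤ 0 then 0 else Real.exp (-(1/(u*c))) / u^2 with hh
  have hexpm : Measurable fun u : ℝ => Real.exp (-(1/(u*c))) := by
    apply Real.measurable_exp.comp
    apply Measurable.neg
    simp only [one_div]
    exact (measurable_id.mul_const c).inv
  have hmeas : Measurable h := by
    apply Measurable.ite (measurableSet_le measurable_id measurable_const) measurable_const
    exact hexpm.div (measurable_id.pow_const 2)
  have hbd : ∀ u : ℝ, 0 ≤ h u ∧ h u ≤ c^2 := by
    intro u
    by_cases hu : u ≤ 0
    · simp [hh, hu]; positivity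
    · push_neg at hu
      simp only [hh, if_neg (not_le.2 hu)]
      constructor
      · positivity
      · have h1 : Real.exp (-(1/(u*c))) ≤ (1/(u*c))⁻¹^2 := by
          have := exp_neg_le_inv_sq (x := 1/(u*c)) (by positivity)
          simpa using this
        have h2 : ((1:ℝ)/(u*c))⁻¹^2 = u^2 * c^2 := by
          rw [one_div, inv_inv]; ring
        rw [div_le_iff₀ (by positivity)]
        calc Real.exp (-(1/(u*c))) ≤ (1/(u*c))⁻¹^2 := h1
          _ = c^2 * u^2 := by rw [h2]; ring
  -- derivative
  have hderivF : ∀ t ∈ Set.uIcc (0:ℝ) lam, HasDerivAt F (h t) t := by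
    intro t ht
    rcases eq_or_lt_of_le (by
      rw [Set.uIcc_of_le hlam.le] at ht
      exact ht.1) with h0 | h0
    · -- t = 0
      rw [← h0]
      have hslope : Tendsto (fun u : ℝ => F u / u) (nhdsWithin 0 {(0:ℝ)}ᶜ) (nhds 0) := by
        apply squeeze_zero_norm' (a := fun u : ℝ => c^3 * |u|)
        · filter_upwards with u
          by_cases hu : u ≤ 0
          · simp only [hF, if_pos hu, zero_div, norm_zero]
            positivity
          · push_neg at hu
            simp only [hF, if_neg (not_le.2 hu)]
            rw [Real.norm_eq_abs, abs_div, abs_of_pos hu]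
            have h1 : Real.exp (-(1/(u*c))) ≤ u^2 * c^2 := by
              have := exp_neg_le_inv_sq (x := 1/(u*c)) (by positivity)
              calc Real.exp (-(1/(u*c))) ≤ (1/(u*c))⁻¹^2 := by simpa using this
                _ = u^2 * c^2 := by rw [one_div, inv_inv]; ring
            have habs : |c * Real.exp (-(1/(u*c)))| = c * Real.exp (-(1/(u*c))) :=
              abs_of_nonneg (by positivity)
            rw [div_le_iff₀ hu]
            nlinarith [h1, hc.le, hu.le]
        · have : Tendsto (fun u : ℝ => c^3 * |u|) (nhds 0) (nhds (c^3 * |0|)) := by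
            apply Tendsto.const_mul
            exact continuous_abs.tendsto 0
          simp only [abs_zero, mul_zero] at this
          exact this.mono_left nhdsWithin_le_nhds
      have : HasDerivAt F 0 0 := by
        rw [hasDerivAt_iff_tendsto_slope]
        apply hslope.congr'
        filter_upwards with u
        rw [slope_def_field]
        simp [hF]
      simpa [hh] using this
    · -- t > 0
      have hev : F =ᶠ[nhds t] (fun u => c * Real.exp (-(u*c)⁻¹)) := by
        filter_upwards [Ioi_mem_nhds h0] with u hu
        simp [hF, not_le.2 (Set.mem_Ioi.mp hu), one_div]
      have h1 : HasDerivAt (fun u : ℝ => u * c) c t := by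
        simpa using (hasDerivAt_id t).mul_const c
      have h2 : HasDerivAt (fun u : ℝ => (u*c)⁻¹) (-c/(t*c)^2) t :=
        h1.inv (by positivity)
      have h3 : HasDerivAt (fun u : ℝ => -(u*c)⁻¹) (c/(t*c)^2) t := by
        exact h2.neg.congr_deriv (by ring)
      have h4 := (h3.exp).const_mul c
      have : HasDerivAt (fun u : ℝ => c * Real.exp (-(u*c)⁻¹))
          (Real.exp (-(1/(t*c))) / t^2) t := by
        refine h4.congr_deriv ?_
        rw [one_div]
        field_simp
      have h5 : HasDerivAt F (Real.exp (-(1/(t*c))) / t^2) t :=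
        this.congr_of_eventuallyEq hev
      simpa [hh, not_le.2 h0] using h5
  have hint : IntervalIntegrable h volume 0 lam := by
    rw [intervalIntegrable_iff_integrableOn_Ioc_of_le hlam.le]
    apply Measure.integrableOn_of_bounded (M := c^2)
      (by simp [Real.volume_Ioc]) hmeas.aestronglyMeasurable
    filter_upwards with u
    rw [Real.norm_eq_abs, abs_of_nonneg (hbd u).1]
    exact (hbd u).2
  have hFTC := intervalIntegral.integral_eq_sub_of_hasDerivAt hderivF hint
  have hF0 : F 0 = 0 := by simp [hF]
  have hFlam : F lam = c * Real.exp (-(1/(lam*c))) := by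
    simp [hF, not_le.2 hlam]
  rw [intervalIntegral.integral_of_le hlam.le] at hFTC
  have hcongr : (∫⁻ u in Set.Ioc (0:ℝ) lam, ENNReal.ofReal (Real.exp (-(1/(u*c))) / u^2))
      = ∫⁻ u in Set.Ioc (0:ℝ) lam, ENNReal.ofReal (h u) := by
    apply setLIntegral_congr_fun measurableSet_Ioc
    intro u hu
    rw [hh]; simp [not_le.2 hu.1]
  rw [hcongr, ← MeasureTheory.ofReal_integral_eq_lintegral_ofReal]
  · rw [hFTC, hF0, hFlam, sub_zero]
  · exact (intervalIntegrable_iff_integrableOn_Ioc_of_le hlam.le).mp hint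
  · filter_upwards with u using (hbd u).1


lemma lint_exp_Ioi (a : ℝ) :
    (∫⁻ v in Set.Ioi a, ENNReal.ofReal (Real.exp (-v))) = ENNReal.ofReal (Real.exp (-a)) := by
  rw [← MeasureTheory.ofReal_integral_eq_lintegral_ofReal]
  · rw [integral_exp_neg_Ioi]
  · have := exp_neg_integrableOn_Ioi a (zero_lt_one)
    simp only [neg_mul, one_mul] at this
    exact this
  · filter_upwards with x using (Real.exp_pos _).le

lemma lint_exp_half :
    (∫⁻ v in Set.Ioi (0:ℝ), ENNReal.ofReal (Real.exp (-(v/2)))) = ENNReal.ofReal 2 := by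
  have hint : IntegrableOn (fun v : ℝ => Real.exp (-(v/2))) (Set.Ioi 0) := by
    have := exp_neg_integrableOn_Ioi 0 (b := 1/2) (by norm_num)
    apply this.congr_fun _ measurableSet_Ioi
    intro x _; ring_nf
  rw [← MeasureTheory.ofReal_integral_eq_lintegral_ofReal hint
    (by filter_upwards with x using (Real.exp_pos _).le)]
  congr 1
  have hF : ∀ x ∈ Set.Ioi (0:ℝ), HasDerivAt (fun v : ℝ => -2 * Real.exp (-(v/2)))
      (Real.exp (-(x/2))) x := by
    intro x _
    have h1 : HasDerivAt (fun v : ℝ => -(v/2)) (-(1/2)) x := by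
      exact ((hasDerivAt_id x).div_const 2).neg.congr_deriv (by ring)
    have h2 := (h1.exp).const_mul (-2 : ℝ)
    exact h2.congr_deriv (by ring)
  have := MeasureTheory.integral_Ioi_of_hasDerivAt_of_tendsto
    (f := fun v : ℝ => -2 * Real.exp (-(v/2))) (f' := fun v : ℝ => Real.exp (-(v/2)))
    (a := 0) (m := 0) ?_ hF hint ?_
  · rw [this]; norm_num
  · exact (Continuous.continuousWithinAt (by continuity))
  · have : Tendsto (fun v : ℝ => -(v/2)) atTop atBot := by
      apply tendsto_neg_atBot_iff.mpr
      exact Tendsto.atTop_div_const (by norm_num) tendsto_id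
    have h := (Real.tendsto_exp_atBot.comp this).const_mul (-2 : ℝ)
    simpa using h


lemma conc_scale {ψ : ℝ → ℝ} (hconc : ConcaveOn ℝ (Set.Ici 0) ψ) (hzero : ψ 0 = 0)
    {lam r : ℝ} (hlam : 0 < lam) (hr : lam ≤ r) : lam * ψ r ≤ r * ψ lam := by
  have hr0 : 0 < r := hlam.trans_le hr
  have ha : (0:ℝ) ≤ 1 - lam / r := by
    have : lam / r ≤ 1 := by rw [div_le_one hr0]; exact hr
    linarith
  have hb : (0:ℝ) ≤ lam / r := by positivity
  have h := hconc.2 (Set.mem_Ici.2 le_rfl) (Set.mem_Ici.2 hr0.le) ha hb (by ring)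
  simp only [smul_eq_mul, mul_zero, zero_add, hzero] at h
  have hx : lam / r * r = lam := by field_simp
  rw [hx] at h
  calc lam * ψ r = r * (lam / r * ψ r) := by
        rw [← mul_assoc, mul_comm r (lam/r), div_mul_cancel₀ _ hr0.ne']
    _ ≤ r * ψ lam := by
        apply mul_le_mul_of_nonneg_left _ hr0.le
        linarith

-- the Hölder extrapolation bound
lemma holder_bound (ψ : ℝ → ℝ)
    (hmono : MonotoneOn ψ (Set.Ici 0))
    (hconc : ConcaveOn ℝ (Set.Ici 0) ψ)
    (hzero : ψ 0 = 0)
    (hnonneg : ∀ t ≥ (0:ℝ), 0 ≤ ψ t)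
    (hψ1 : 0 < ψ 1)
    {X : Type*} [MeasurableSpace X] (μ : Measure X)
    (f : X → ℝ) (hfmeas : Measurable f) (hfnn : ∀ x, 0 ≤ f x)
    (K : ℝ)
    (hfLp : ∀ p > (1:ℝ),
      eLpNorm f (ENNReal.ofReal p) μ ≤
        ENNReal.ofReal (K * ψ (Real.exp (1 / (p - 1)))))
    {a : ℝ} (ha : 0 < a) :
    (∫⁻ x, ENNReal.ofReal (f x - a) ∂μ) ≤
      ENNReal.ofReal ((Real.exp 1)^2 * (max K 1)^2 * (max (ψ 1) 1) *
        ψ (max (Real.exp 1) (1/a))) := by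
  set L : ℝ := max 1 (Real.log (1/a)) with hL
  have hL1 : (1:ℝ) ≤ L := le_max_left _ _
  have hL0 : (0:ℝ) < L := lt_of_lt_of_le one_pos hL1
  set p : ℝ := 1 + 1/L with hp
  have hp1 : 1 < p := by
    have : 0 < 1/L := by positivity
    simp only [hp]; linarith
  have hp0 : 0 < p := lt_trans one_pos hp1
  have hpm1 : p - 1 = 1/L := by rw [hp]; ring
  have hinv : 1 / (p - 1) = L := by rw [hpm1, one_div_one_div]
  set q : ℝ := Real.conjExponent p with hq
  have hpq : p.HolderConjugate q := Real.HolderConjugate.conjExponent hp1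
  have heL : Real.exp L = max (Real.exp 1) (1/a) := by
    rw [hL, Monotone.map_max Real.exp_monotone, Real.exp_log (by positivity)]
  have heL1 : (1:ℝ) ≤ Real.exp L := by
    rw [← Real.exp_zero]; exact Real.exp_le_exp.2 (by linarith)
  -- ψ (exp L) facts
  have hψeL0 : 0 ≤ ψ (Real.exp L) := hnonneg _ (by positivity)
  have hψeL_le : ψ (Real.exp L) ≤ Real.exp L * ψ 1 := by
    have := conc_scale hconc hzero one_pos heL1
    linarith [this]
  set K₁ : ℝ := max K 1 with hK₁
  have hK₁1 : (1:ℝ) ≤ K₁ := le_max_right _ _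
  set ψ₁ : ℝ := max (ψ 1) 1 with hψ₁
  have hψ₁1 : (1:ℝ) ≤ ψ₁ := le_max_right _ _
  set z : ℝ := K₁ * ψ (Real.exp L) with hz
  have hz0 : 0 ≤ z := by positivity
  set F : X → ℝ≥0∞ := fun x => ENNReal.ofReal (f x) with hFdef
  have hFmeas : Measurable F := hfmeas.ennreal_ofReal
  set S : Set X := {x | a < f x} with hS
  have hSmeas : MeasurableSet S := measurableSet_lt measurable_const hfmeas
  set G : X → ℝ≥0∞ := S.indicator (fun _ => (1:ℝ≥0∞)) with hG
  have hGmeas : Measurable G := measurable_one.indicator hSmeas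
  -- eLpNorm bound
  have hsnorm : (∫⁻ x, F x ^ p ∂μ) ^ (1/p) ≤ ENNReal.ofReal z := by
    have h1 := hfLp p hp1
    rw [hinv] at h1
    have h2 : eLpNorm f (ENNReal.ofReal p) μ
        = (∫⁻ x, F x ^ p ∂μ) ^ (1/p) := by
      rw [MeasureTheory.eLpNorm_eq_lintegral_rpow_enorm
        (by simp [ENNReal.ofReal_eq_zero]; linarith) ENNReal.ofReal_ne_top]
      rw [ENNReal.toReal_ofReal hp0.le]
      congr 1
      apply lintegral_congr
      intro x
      rw [Real.enorm_eq_ofReal (hfnn x)]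
    rw [h2] at h1
    refine h1.trans (ENNReal.ofReal_le_ofReal ?_)
    rw [hz]
    apply mul_le_mul_of_nonneg_right (le_max_left _ _) hψeL0
  have hE : (∫⁻ x, F x ^ p ∂μ) ≤ (ENNReal.ofReal z) ^ p := by
    have h := ENNReal.rpow_le_rpow hsnorm (le_of_lt hp0)
    rwa [← ENNReal.rpow_mul, one_div, inv_mul_cancel₀ (ne_of_gt hp0), ENNReal.rpow_one] at h
  -- Chebyshev
  have hcheb : μ S ≤ (ENNReal.ofReal z) ^ p * (ENNReal.ofReal a) ^ (-p) := by
    have h1 : (ENNReal.ofReal a) ^ p * μ S ≤ ∫⁻ x, F x ^ p ∂μ := by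
      have h2 : (ENNReal.ofReal a) ^ p * μ S = ∫⁻ x in S, (ENNReal.ofReal a) ^ p ∂μ := by
        rw [setLIntegral_const, mul_comm]
      rw [h2]
      refine le_trans (setLIntegral_mono' hSmeas ?_) (setLIntegral_le_lintegral _ _)
      intro x hx
      exact ENNReal.rpow_le_rpow (ENNReal.ofReal_le_ofReal (le_of_lt hx)) hp0.le
    have ha' : (ENNReal.ofReal a) ^ p ≠ 0 := by
      apply ne_of_gt
      apply ENNReal.rpow_pos (by simp [ENNReal.ofReal_pos]; exact ha) ENNReal.ofReal_ne_top
    have ha'' : (ENNReal.ofReal a) ^ p ≠ ⊤ := by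
      apply ENNReal.rpow_ne_top_of_nonneg hp0.le ENNReal.ofReal_ne_top
    calc μ S = ((ENNReal.ofReal a) ^ p)⁻¹ * ((ENNReal.ofReal a) ^ p * μ S) := by
          rw [← mul_assoc, ENNReal.inv_mul_cancel ha' ha'', one_mul]
      _ ≤ ((ENNReal.ofReal a) ^ p)⁻¹ * (∫⁻ x, F x ^ p ∂μ) := mul_le_mul_right h1 _
      _ ≤ ((ENNReal.ofReal a) ^ p)⁻¹ * (ENNReal.ofReal z) ^ p := mul_le_mul_right hE _
      _ = (ENNReal.ofReal z) ^ p * (ENNReal.ofReal a) ^ (-p) := by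
          rw [ENNReal.rpow_neg, mul_comm]
  -- pointwise bound and Hölder
  have hpt : (∫⁻ x, ENNReal.ofReal (f x - a) ∂μ) ≤ ∫⁻ x, F x * G x ∂μ := by
    apply lintegral_mono
    intro x
    show ENNReal.ofReal (f x - a) ≤ F x * G x
    by_cases hx : a < f x
    · have hGx : G x = 1 := Set.indicator_of_mem (show x ∈ S from hx) _
      rw [hGx, mul_one]
      exact ENNReal.ofReal_le_ofReal (by linarith)
    · have h0 : ENNReal.ofReal (f x - a) = 0 := by
        rw [ENNReal.ofReal_eq_zero]; push_neg at hx; linarith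
      rw [h0]; exact zero_le
  have hGq : (∫⁻ x, G x ^ q ∂μ) = μ S := by
    have : ∀ x, G x ^ q = G x := by
      intro x
      rw [hG]
      by_cases hx : x ∈ S
      · rw [Set.indicator_of_mem hx, ENNReal.one_rpow]
      · rw [Set.indicator_of_notMem hx, ENNReal.zero_rpow_of_pos hpq.symm.pos]
    rw [lintegral_congr this, hG, lintegral_indicator hSmeas]
    simp
  have hhold := ENNReal.lintegral_mul_le_Lp_mul_Lq μ hpq hFmeas.aemeasurable hGmeas.aemeasurable
  rw [hGq] at hhold
  -- combine
  have hcomb : (∫⁻ x, ENNReal.ofReal (f x - a) ∂μ) ≤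
      (ENNReal.ofReal z) ^ p * (ENNReal.ofReal a) ^ (1 - p) := by
    refine hpt.trans (hhold.trans ?_)
    have hq0 : 0 < q := hpq.symm.pos
    have h1 : (μ S) ^ (1/q) ≤ ((ENNReal.ofReal z) ^ p * (ENNReal.ofReal a) ^ (-p)) ^ (1/q) :=
      ENNReal.rpow_le_rpow hcheb (by positivity)
    have h2 : ((ENNReal.ofReal z) ^ p * (ENNReal.ofReal a) ^ (-p)) ^ (1/q)
        = (ENNReal.ofReal z) ^ (p/q) * (ENNReal.ofReal a) ^ ((-p)/q) := by
      have hane : (ENNReal.ofReal a) ≠ 0 := (ENNReal.ofReal_pos.2 ha).ne'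
      have h_ne_top : (ENNReal.ofReal a) ^ (-p) ≠ ⊤ := by
        simp [ENNReal.rpow_eq_top_iff, hane, ENNReal.ofReal_ne_top]
      rw [ENNReal.mul_rpow_of_ne_top (ENNReal.rpow_ne_top_of_nonneg hp0.le ENNReal.ofReal_ne_top)
        h_ne_top, ← ENNReal.rpow_mul, ← ENNReal.rpow_mul]
      rw [mul_one_div, mul_one_div]
    calc (∫⁻ x, F x ^ p ∂μ) ^ (1/p) * (μ S) ^ (1/q)
        ≤ ENNReal.ofReal z * ((ENNReal.ofReal z) ^ (p/q) * (ENNReal.ofReal a) ^ ((-p)/q)) := by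
          apply mul_le_mul' hsnorm
          rw [← h2]; exact h1
      _ = (ENNReal.ofReal z) ^ p * (ENNReal.ofReal a) ^ (1 - p) := by
          rw [← mul_assoc]
          congr 1
          · have hzpos' : 0 < ψ (Real.exp L) :=
              lt_of_lt_of_le hψ1 (hmono (Set.mem_Ici.2 zero_le_one)
                (Set.mem_Ici.2 (by positivity)) heL1)
            have hzne : (ENNReal.ofReal z) ≠ 0 := by
              simp only [ne_eq, ENNReal.ofReal_eq_zero, not_le, hz]
              nlinarith
            have hsplit : (ENNReal.ofReal z) ^ p
                = (ENNReal.ofReal z) ^ (1:ℝ) * (ENNReal.ofReal z) ^ (p - 1) := by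
              rw [← ENNReal.rpow_add _ _ hzne ENNReal.ofReal_ne_top]
              congr 1; ring
            rw [hpq.div_conj_eq_sub_one, hsplit, ENNReal.rpow_one]
          · congr 1
            rw [div_eq_mul_inv, neg_mul, ← div_eq_mul_inv, hpq.div_conj_eq_sub_one]
            ring
  refine hcomb.trans ?_
  -- numeric estimate
  have hψeLpos : 0 < ψ (Real.exp L) :=
    lt_of_lt_of_le hψ1 (hmono (Set.mem_Ici.2 zero_le_one)
      (Set.mem_Ici.2 (by positivity)) heL1)
  have hzpos : 0 < z := by rw [hz]; nlinarith
  rw [ENNReal.ofReal_rpow_of_pos hzpos, ENNReal.ofReal_rpow_of_pos ha,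
    ← ENNReal.ofReal_mul (by positivity)]
  apply ENNReal.ofReal_le_ofReal
  -- real inequality: z^p * a^(1-p) ≤ e^2 K₁^2 ψ₁ ψ(exp L)
  have hzp : z ^ p = z * z ^ (1/L) := by
    rw [hp, Real.rpow_add hzpos, Real.rpow_one]
  have hz_le : z ≤ (K₁ * ψ₁) * Real.exp L := by
    rw [hz]
    calc K₁ * ψ (Real.exp L) ≤ K₁ * (Real.exp L * ψ 1) := by
          apply mul_le_mul_of_nonneg_left hψeL_le (by linarith)
      _ ≤ K₁ * (Real.exp L * ψ₁) := by
          apply mul_le_mul_of_nonneg_left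
            (mul_le_mul_of_nonneg_left (le_max_left _ _) (Real.exp_pos L).le) (by linarith)
      _ = (K₁ * ψ₁) * Real.exp L := by ring
  have hz1L : z ^ (1/L) ≤ (K₁ * ψ₁) * Real.exp 1 := by
    calc z ^ (1/L) ≤ ((K₁ * ψ₁) * Real.exp L) ^ (1/L) := by
          apply Real.rpow_le_rpow hz0 hz_le (by positivity)
      _ = (K₁ * ψ₁) ^ (1/L) * (Real.exp L) ^ (1/L) := by
          apply Real.mul_rpow (by positivity) (Real.exp_pos _).le
      _ ≤ (K₁ * ψ₁) * Real.exp 1 := by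
          have hb1 : (K₁ * ψ₁) ^ (1/L) ≤ K₁ * ψ₁ := by
            calc (K₁ * ψ₁) ^ (1/L) ≤ (K₁ * ψ₁) ^ (1:ℝ) := by
                  apply Real.rpow_le_rpow_of_exponent_le (by nlinarith)
                  rw [div_le_one hL0]; exact hL1
              _ = K₁ * ψ₁ := Real.rpow_one _
          have hb2 : (Real.exp L) ^ (1/L) = Real.exp 1 := by
            rw [← Real.exp_mul, mul_one_div, div_self hL0.ne']
          rw [hb2]
          apply mul_le_mul_of_nonneg_right hb1 (Real.exp_pos 1).le
  have haP : a ^ (1 - p) ≤ Real.exp 1 := by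
    rw [Real.rpow_def_of_pos ha]
    apply Real.exp_le_exp.2
    have h6 : Real.log a * (1 - p) = (1/L) * Real.log (1/a) := by
      rw [one_div a, Real.log_inv, hp]; ring
    rw [h6]
    calc (1/L) * Real.log (1/a) ≤ (1/L) * L := by
          apply mul_le_mul_of_nonneg_left (le_max_right _ _) (by positivity)
      _ = 1 := by field_simp
  rw [← heL]
  have h3 : z ^ p ≤ z * ((K₁ * ψ₁) * Real.exp 1) := by
    rw [hzp]
    apply mul_le_mul_of_nonneg_left hz1L hzpos.le
  have h5 : (0:ℝ) ≤ a ^ (1 - p) := Real.rpow_nonneg ha.le _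
  calc z ^ p * a ^ (1 - p) ≤ (z * ((K₁ * ψ₁) * Real.exp 1)) * Real.exp 1 := by
        apply mul_le_mul h3 haP h5
        have hKψ : (0:ℝ) < K₁ * ψ₁ * Real.exp 1 :=
          mul_pos (mul_pos (lt_of_lt_of_le one_pos hK₁1) (lt_of_lt_of_le one_pos hψ₁1))
            (Real.exp_pos 1)
        exact le_of_lt (mul_pos hzpos hKψ)
    _ = (Real.exp 1)^2 * K₁^2 * ψ₁ * ψ (Real.exp L) := by rw [hz]; ring

-- L6 : pointwise cap dominated by v-integral
lemma cap_le_vint {c lam : ℝ} (hc : 0 < c) (hlam : 0 < lam) :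
    ENNReal.ofReal (c * Real.exp (-(1/(lam*c)))) ≤
      ∫⁻ v in Set.Ioi (0:ℝ),
        2 * ENNReal.ofReal (Real.exp (-v)) * ENNReal.ofReal (c - 1/(2*lam*v)) := by
  set a₀ : ℝ := 1/(lam*c) with ha₀
  have ha₀pos : 0 < a₀ := by positivity
  have hsub : Set.Ioi a₀ ⊆ Set.Ioi (0:ℝ) := fun v hv => lt_trans ha₀pos hv
  have hmono : (∫⁻ v in Set.Ioi a₀,
        2 * ENNReal.ofReal (Real.exp (-v)) * ENNReal.ofReal (c - 1/(2*lam*v))) ≤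
      ∫⁻ v in Set.Ioi (0:ℝ),
        2 * ENNReal.ofReal (Real.exp (-v)) * ENNReal.ofReal (c - 1/(2*lam*v)) :=
    lintegral_mono' (Measure.restrict_mono hsub le_rfl) le_rfl
  refine le_trans ?_ hmono
  have hpt : ∀ v ∈ Set.Ioi a₀,
      ENNReal.ofReal (Real.exp (-v)) * ENNReal.ofReal c ≤
        2 * ENNReal.ofReal (Real.exp (-v)) * ENNReal.ofReal (c - 1/(2*lam*v)) := by
    intro v hv
    have hv0 : 0 < v := lt_trans ha₀pos hv
    have hkey : c ≤ 2 * (c - 1/(2*lam*v)) := by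
      have h1 : 1/(2*lam*v) < c/2 := by
        rw [div_lt_iff₀ (by positivity)]
        have : a₀ < v := hv
        rw [ha₀, one_div] at this
        have h2 : 1/(lam*c) < v := by rw [one_div]; exact this
        rw [div_lt_iff₀ (by positivity)] at h2
        nlinarith [hlam, hc, hv0]
      linarith
    calc ENNReal.ofReal (Real.exp (-v)) * ENNReal.ofReal c
        ≤ ENNReal.ofReal (Real.exp (-v)) * ENNReal.ofReal (2 * (c - 1/(2*lam*v))) := by
          exact mul_le_mul_right (ENNReal.ofReal_le_ofReal hkey) _
      _ = 2 * ENNReal.ofReal (Real.exp (-v)) * ENNReal.ofReal (c - 1/(2*lam*v)) := by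
          rw [ENNReal.ofReal_mul (by norm_num : (0:ℝ) ≤ 2)]
          rw [ENNReal.ofReal_ofNat]
          ring
  calc ENNReal.ofReal (c * Real.exp (-(1/(lam*c))))
      = ENNReal.ofReal (Real.exp (-a₀)) * ENNReal.ofReal c := by
        rw [← ENNReal.ofReal_mul (Real.exp_pos _).le, ha₀]; ring_nf
    _ = (∫⁻ v in Set.Ioi a₀, ENNReal.ofReal (Real.exp (-v))) * ENNReal.ofReal c := by
        rw [lint_exp_Ioi]
    _ = ∫⁻ v in Set.Ioi a₀, ENNReal.ofReal (Real.exp (-v)) * ENNReal.ofReal c := by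
        rw [lintegral_mul_const' _ _ ENNReal.ofReal_ne_top]
    _ ≤ ∫⁻ v in Set.Ioi a₀,
          2 * ENNReal.ofReal (Real.exp (-v)) * ENNReal.ofReal (c - 1/(2*lam*v)) := by
        apply setLIntegral_mono' measurableSet_Ioi hpt

set_option maxHeartbeats 1000000 in
/-- Let `ψ ∈ Ω` be continuously differentiable on `(0,∞)` with
`ψ t = ∫₀^t ψ'`, `ψ' ∈ L^p((0,∞))` for every `p > 1` and `ψ' ∉ L¹((0,∞))`. Let `(X,μ)`
be σ-finite and `f : X → [0,∞)` measurable, essentially bounded, with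
`sup_{p>1} ‖f‖_p/ψ(e^{1/(p-1)}) < ∞`. Then (convention `e^{-1/(u·f(x))} = 0` when
`f(x) = 0`)
`sup_{λ>0} (1/ψ(λ)) ∫₀^λ (∫_X e^{-1/(u f)} dμ) du/u² < ∞`. -/
theorem stmt19
    (ψ ψ' : ℝ → ℝ)
    (hmono : MonotoneOn ψ (Set.Ici 0))
    (hconc : ConcaveOn ℝ (Set.Ici 0) ψ)
    (hzero : ψ 0 = 0)
    (hnonneg : ∀ t ≥ (0:ℝ), 0 ≤ ψ t)
    (htop : Tendsto ψ atTop atTop)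
    (hderiv : ∀ t ∈ Set.Ioi (0:ℝ), HasDerivAt ψ (ψ' t) t)
    (hcont : ContinuousOn ψ' (Set.Ioi 0))
    (hfund : ∀ t ≥ (0:ℝ), ψ t = ∫ s in (0:ℝ)..t, ψ' s)
    (hLp : ∀ p : ℝ, 1 < p →
      MemLp ψ' (ENNReal.ofReal p) (volume.restrict (Set.Ioi (0:ℝ))))
    (hnotL1 : (∫⁻ t in Set.Ioi (0:ℝ), ENNReal.ofReal (ψ' t)) = ⊤)
    {X : Type*} [MeasurableSpace X] (μ : Measure X) [SigmaFinite μ]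
    (f : X → ℝ)
    (hfmeas : Measurable f)
    (hfnn : ∀ x, 0 ≤ f x)
    (hfbdd : ∃ C : ℝ, ∀ᵐ x ∂μ, f x ≤ C)
    (K : ℝ)
    (hfLp : ∀ p > (1:ℝ),
      eLpNorm f (ENNReal.ofReal p) μ ≤
        ENNReal.ofReal (K * ψ (Real.exp (1 / (p - 1))))) :
    ∃ C : ℝ, ∀ lam > (0:ℝ),
      (∫⁻ u in Set.Ioc (0:ℝ) lam,
        (∫⁻ x, ENNReal.ofReal
            (if f x = 0 then 0 else Real.exp (-(1 / (u * f x)))) ∂μ) /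
          ENNReal.ofReal (u ^ 2)) ≤ ENNReal.ofReal (C * ψ lam) := by
  classical
  -- ψ 1 > 0
  have hψ1 : 0 < ψ 1 := by
    obtain ⟨t, ht⟩ := ((htop.eventually_gt_atTop 0).and (eventually_ge_atTop 1)).exists
    obtain ⟨ht0, ht1⟩ := ht
    have hcs := conc_scale hconc hzero one_pos ht1
    nlinarith [lt_of_lt_of_le one_pos ht1]
  have he1pos : (0:ℝ) < Real.exp 1 := Real.exp_pos 1
  have he1ge1 : (1:ℝ) ≤ Real.exp 1 := by
    linarith [Real.add_one_le_exp (1:ℝ)]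
  have he1le4 : Real.exp 1 ≤ 4 := by
    have := Real.exp_one_lt_d9
    linarith
  set C₁ : ℝ := (Real.exp 1)^2 * (max K 1)^2 * (max (ψ 1) 1) with hC₁
  have hC₁pos : 0 < C₁ := by
    apply mul_pos (mul_pos (by positivity) _) (lt_of_lt_of_le one_pos (le_max_right _ _))
    have : (1:ℝ) ≤ max K 1 := le_max_right _ _
    nlinarith
  set Cs : ℝ := (K * ψ (Real.exp 1))^2 / ψ 1 with hCs
  refine ⟨max Cs (16 * C₁), ?_⟩
  intro lam hlam
  -- measurability facts
  have hmeas1 : Measurable (fun q : ℝ × X =>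
      ENNReal.ofReal (if f q.2 = 0 then 0 else Real.exp (-(1/(q.1 * f q.2))))) := by
    apply Measurable.ennreal_ofReal
    apply Measurable.ite
    · exact (hfmeas.comp measurable_snd) (measurableSet_singleton 0)
    · exact measurable_const
    · apply Real.measurable_exp.comp
      apply Measurable.neg
      simp only [one_div]
      exact (measurable_fst.mul (hfmeas.comp measurable_snd)).inv
  have hmeasg : Measurable (fun q : ℝ × X =>
      ENNReal.ofReal (if f q.2 = 0 then 0 else Real.exp (-(1/(q.1 * f q.2)))) *
        (ENNReal.ofReal (q.1^2))⁻¹) :=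
    hmeas1.mul ((measurable_fst.pow_const 2).ennreal_ofReal.inv)
  -- Step A: rewrite division as multiplication inside
  have hstepA : (∫⁻ u in Set.Ioc (0:ℝ) lam,
        (∫⁻ x, ENNReal.ofReal
            (if f x = 0 then 0 else Real.exp (-(1 / (u * f x)))) ∂μ) /
          ENNReal.ofReal (u ^ 2))
      = ∫⁻ u in Set.Ioc (0:ℝ) lam, ∫⁻ x,
          ENNReal.ofReal (if f x = 0 then 0 else Real.exp (-(1/(u * f x)))) *
            (ENNReal.ofReal (u^2))⁻¹ ∂μ := by
    apply lintegral_congr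
    intro u
    rw [div_eq_mul_inv]
    exact (lintegral_mul_const'' _ (hmeas1.comp measurable_prodMk_left).aemeasurable).symm
  -- Step B: swap
  have hstepB : (∫⁻ u in Set.Ioc (0:ℝ) lam, ∫⁻ x,
          ENNReal.ofReal (if f x = 0 then 0 else Real.exp (-(1/(u * f x)))) *
            (ENNReal.ofReal (u^2))⁻¹ ∂μ)
      = ∫⁻ x, (∫⁻ u in Set.Ioc (0:ℝ) lam,
          ENNReal.ofReal (if f x = 0 then 0 else Real.exp (-(1/(u * f x)))) *
            (ENNReal.ofReal (u^2))⁻¹) ∂μ :=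
    lintegral_lintegral_swap hmeasg.aemeasurable
  -- Step C: per-x bound
  have hstepC : (∫⁻ x, (∫⁻ u in Set.Ioc (0:ℝ) lam,
          ENNReal.ofReal (if f x = 0 then 0 else Real.exp (-(1/(u * f x)))) *
            (ENNReal.ofReal (u^2))⁻¹) ∂μ)
      ≤ ∫⁻ x, ENNReal.ofReal
          (if f x = 0 then 0 else f x * Real.exp (-(1/(lam * f x)))) ∂μ := by
    apply lintegral_mono
    intro x
    beta_reduce
    by_cases hfx : f x = 0
    · simp [hfx]
    · have hc : 0 < f x := lt_of_le_of_ne (hfnn x) (Ne.symm hfx)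
      have hcongr : (∫⁻ u in Set.Ioc (0:ℝ) lam,
            ENNReal.ofReal (if f x = 0 then 0 else Real.exp (-(1/(u * f x)))) *
              (ENNReal.ofReal (u^2))⁻¹)
          = ∫⁻ u in Set.Ioc (0:ℝ) lam,
              ENNReal.ofReal (Real.exp (-(1/(u * f x))) / u^2) := by
        apply setLIntegral_congr_fun measurableSet_Ioc
        intro u hu
        beta_reduce
        rw [if_neg hfx, ← div_eq_mul_inv, ← ENNReal.ofReal_div_of_pos (pow_pos hu.1 2)]
      rw [hcongr, lint_u hc hlam, if_neg hfx]
  -- now case split on lam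
  set B : ℝ≥0∞ := ∫⁻ x, ENNReal.ofReal
      (if f x = 0 then 0 else f x * Real.exp (-(1/(lam * f x)))) ∂μ with hB
  have hred : (∫⁻ u in Set.Ioc (0:ℝ) lam,
        (∫⁻ x, ENNReal.ofReal
            (if f x = 0 then 0 else Real.exp (-(1 / (u * f x)))) ∂μ) /
          ENNReal.ofReal (u ^ 2)) ≤ B := by
    rw [hstepA, hstepB]; exact hstepC
  refine hred.trans ?_
  have hψlam0 : 0 ≤ ψ lam := hnonneg lam hlam.le
  rcases le_or_gt lam 1 with hsmall | hbig
  · -- small lam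
    have h1 : B ≤ ∫⁻ x, ENNReal.ofReal (lam * f x^2) ∂μ := by
      apply lintegral_mono
      intro x
      beta_reduce
      by_cases hfx : f x = 0
      · simp [hfx]
      · have hc : 0 < f x := lt_of_le_of_ne (hfnn x) (Ne.symm hfx)
        rw [if_neg hfx]
        apply ENNReal.ofReal_le_ofReal
        set y : ℝ := 1/(lam * f x) with hy
        have hy0 : 0 < y := by positivity
        have hexp : Real.exp (-y) ≤ lam * f x := by
          rw [Real.exp_neg]
          have h2 : y ≤ Real.exp y := by linarith [Real.add_one_le_exp y]
          have h3 : (Real.exp y)⁻¹ ≤ y⁻¹ := inv_anti₀ hy0 h2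
          have h4 : y⁻¹ = lam * f x := by rw [hy, one_div, inv_inv]
          linarith
        nlinarith [hc]
    have h2 : (∫⁻ x, ENNReal.ofReal (lam * f x^2) ∂μ)
        = ENNReal.ofReal lam * ∫⁻ x, ENNReal.ofReal (f x^2) ∂μ := by
      rw [← lintegral_const_mul'' _ ((hfmeas.pow_const 2).ennreal_ofReal.aemeasurable)]
      apply lintegral_congr
      intro x
      rw [← ENNReal.ofReal_mul hlam.le]
    have h3 : (∫⁻ x, ENNReal.ofReal (f x^2) ∂μ) ≤ ENNReal.ofReal ((K * ψ (Real.exp 1))^2) := by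
      have hLp2 := hfLp 2 one_lt_two
      have he : Real.exp (1/((2:ℝ) - 1)) = Real.exp 1 := by norm_num
      rw [he] at hLp2
      have heq : eLpNorm f (ENNReal.ofReal 2) μ
          = (∫⁻ x, ENNReal.ofReal (f x^2) ∂μ) ^ (1/(2:ℝ)) := by
        rw [MeasureTheory.eLpNorm_eq_lintegral_rpow_enorm
          (by simp) ENNReal.ofReal_ne_top]
        rw [ENNReal.toReal_ofReal (by norm_num : (0:ℝ) ≤ 2)]
        congr 1
        apply lintegral_congr
        intro x
        rw [Real.enorm_eq_ofReal (hfnn x),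
          ENNReal.ofReal_rpow_of_nonneg (hfnn x) (by norm_num)]
        congr 1
        rw [show (2:ℝ) = ((2:ℕ):ℝ) by norm_num, Real.rpow_natCast]
      rw [heq] at hLp2
      have h4 := ENNReal.rpow_le_rpow hLp2 (by norm_num : (0:ℝ) ≤ 2)
      rw [← ENNReal.rpow_mul, one_div, inv_mul_cancel₀ (by norm_num : (2:ℝ) ≠ 0),
        ENNReal.rpow_one] at h4
      refine h4.trans ?_
      rcases le_or_gt 0 (K * ψ (Real.exp 1)) with hw | hw
      · rw [ENNReal.ofReal_rpow_of_nonneg hw (by norm_num : (0:ℝ) ≤ 2)]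
        apply ENNReal.ofReal_le_ofReal
        rw [show ((2:ℝ)) = ((2:ℕ):ℝ) by norm_num, Real.rpow_natCast]
      · rw [ENNReal.ofReal_eq_zero.2 hw.le, ENNReal.zero_rpow_of_pos (by norm_num)]
        exact zero_le
    calc B ≤ ∫⁻ x, ENNReal.ofReal (lam * f x^2) ∂μ := h1
      _ = ENNReal.ofReal lam * ∫⁻ x, ENNReal.ofReal (f x^2) ∂μ := h2
      _ ≤ ENNReal.ofReal lam * ENNReal.ofReal ((K * ψ (Real.exp 1))^2) := mul_le_mul_right h3 _
      _ = ENNReal.ofReal (lam * (K * ψ (Real.exp 1))^2) := by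
          rw [← ENNReal.ofReal_mul hlam.le]
      _ ≤ ENNReal.ofReal (Cs * ψ lam) := by
          apply ENNReal.ofReal_le_ofReal
          have hcs := conc_scale hconc hzero hlam hsmall
          rw [hCs, div_mul_eq_mul_div, le_div_iff₀ hψ1]
          nlinarith [sq_nonneg (K * ψ (Real.exp 1))]
      _ ≤ ENNReal.ofReal (max Cs (16 * C₁) * ψ lam) := by
          apply ENNReal.ofReal_le_ofReal
          exact mul_le_mul_of_nonneg_right (le_max_left _ _) hψlam0
  · -- big lam
    have hlam1 : (1:ℝ) ≤ lam := hbig.le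
    -- pointwise to v-integral
    have h1 : B ≤ ∫⁻ x, (∫⁻ v in Set.Ioi (0:ℝ),
        2 * ENNReal.ofReal (Real.exp (-v)) * ENNReal.ofReal (f x - 1/(2*lam*v))) ∂μ := by
      apply lintegral_mono
      intro x
      beta_reduce
      by_cases hfx : f x = 0
      · simp [hfx]
      · have hc : 0 < f x := lt_of_le_of_ne (hfnn x) (Ne.symm hfx)
        rw [if_neg hfx]
        exact cap_le_vint hc hlam
    -- swap
    have hmeas2 : Measurable (fun q : X × ℝ =>
        2 * ENNReal.ofReal (Real.exp (-q.2)) * ENNReal.ofReal (f q.1 - 1/(2*lam*q.2))) := by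
      apply Measurable.fun_mul
      · exact (measurable_const.mul
          ((Real.measurable_exp.comp measurable_snd.neg).ennreal_ofReal))
      · apply Measurable.ennreal_ofReal
        apply Measurable.sub
        · exact hfmeas.comp measurable_fst
        · exact (measurable_const.div ((measurable_const.mul measurable_snd)))
    have h2 : (∫⁻ x, (∫⁻ v in Set.Ioi (0:ℝ),
          2 * ENNReal.ofReal (Real.exp (-v)) * ENNReal.ofReal (f x - 1/(2*lam*v))) ∂μ)
        = ∫⁻ v in Set.Ioi (0:ℝ), (∫⁻ x,
            2 * ENNReal.ofReal (Real.exp (-v)) * ENNReal.ofReal (f x - 1/(2*lam*v)) ∂μ) :=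
      lintegral_lintegral_swap hmeas2.aemeasurable
    -- per-v bound
    have h3 : (∫⁻ v in Set.Ioi (0:ℝ), (∫⁻ x,
            2 * ENNReal.ofReal (Real.exp (-v)) * ENNReal.ofReal (f x - 1/(2*lam*v)) ∂μ))
        ≤ ∫⁻ v in Set.Ioi (0:ℝ), ENNReal.ofReal (8 * C₁ * ψ lam * Real.exp (-(v/2))) := by
      apply setLIntegral_mono' measurableSet_Ioi
      intro v hv
      have hv0 : 0 < v := hv
      have ha : 0 < 1/(2*lam*v) := by positivity
      have hpull : (∫⁻ x, 2 * ENNReal.ofReal (Real.exp (-v)) *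
            ENNReal.ofReal (f x - 1/(2*lam*v)) ∂μ)
          = 2 * ENNReal.ofReal (Real.exp (-v)) *
              ∫⁻ x, ENNReal.ofReal (f x - 1/(2*lam*v)) ∂μ := by
        rw [← lintegral_const_mul'' (f := fun x => ENNReal.ofReal (f x - 1/(2*lam*v))) _
          ((hfmeas.sub measurable_const).ennreal_ofReal.aemeasurable)]
      rw [hpull]
      have hhold := holder_bound ψ hmono hconc hzero hnonneg hψ1 μ f hfmeas hfnn K hfLp ha
      have hinv1a : 1/(1/(2*lam*v)) = 2*lam*v := one_div_one_div _
      rw [hinv1a] at hhold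
      -- ψ (max e1 (2 lam v)) ≤ (e1 + 2 v) * ψ lam
      have hψmax : ψ (max (Real.exp 1) (2*lam*v)) ≤ (Real.exp 1 + 2*v) * ψ lam := by
        have hr0 : 0 ≤ max (Real.exp 1) (2*lam*v) := le_trans he1pos.le (le_max_left _ _)
        rcases le_or_gt (max (Real.exp 1) (2*lam*v)) lam with hle | hgt
        · have := hmono (Set.mem_Ici.2 hr0) (Set.mem_Ici.2 hlam.le) hle
          nlinarith [hψlam0, hv0, he1ge1]
        · have hcs := conc_scale hconc hzero hlam hgt.le
          have hrle : max (Real.exp 1) (2*lam*v) ≤ Real.exp 1 + 2*lam*v := by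
            apply max_le
            · nlinarith [hlam, hv0]
            · nlinarith [he1pos]
          have hle2 : Real.exp 1 + 2*lam*v ≤ lam * (Real.exp 1 + 2*v) := by nlinarith
          have hm1 : (max (Real.exp 1) (2*lam*v)) * ψ lam ≤ (Real.exp 1 + 2*lam*v) * ψ lam :=
            mul_le_mul_of_nonneg_right hrle hψlam0
          have hm2 : (Real.exp 1 + 2*lam*v) * ψ lam ≤ (lam * (Real.exp 1 + 2*v)) * ψ lam :=
            mul_le_mul_of_nonneg_right hle2 hψlam0
          have hchain : lam * ψ (max (Real.exp 1) (2*lam*v)) ≤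
              lam * ((Real.exp 1 + 2*v) * ψ lam) := by
            calc lam * ψ (max (Real.exp 1) (2*lam*v))
                ≤ (max (Real.exp 1) (2*lam*v)) * ψ lam := hcs
              _ ≤ (Real.exp 1 + 2*lam*v) * ψ lam := hm1
              _ ≤ (lam * (Real.exp 1 + 2*v)) * ψ lam := hm2
              _ = lam * ((Real.exp 1 + 2*v) * ψ lam) := by ring
          exact le_of_mul_le_mul_left hchain hlam
      have hmono2 : (∫⁻ x, ENNReal.ofReal (f x - 1/(2*lam*v)) ∂μ)
          ≤ ENNReal.ofReal (C₁ * ((Real.exp 1 + 2*v) * ψ lam)) := by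
        refine hhold.trans (ENNReal.ofReal_le_ofReal ?_)
        rw [hC₁]
        apply mul_le_mul_of_nonneg_left hψmax
        positivity
      calc 2 * ENNReal.ofReal (Real.exp (-v)) * ∫⁻ x, ENNReal.ofReal (f x - 1/(2*lam*v)) ∂μ
          ≤ 2 * ENNReal.ofReal (Real.exp (-v)) * ENNReal.ofReal (C₁ * ((Real.exp 1 + 2*v) * ψ lam)) :=
            mul_le_mul_right hmono2 _
        _ = ENNReal.ofReal (2 * Real.exp (-v) * (C₁ * ((Real.exp 1 + 2*v) * ψ lam))) := by
            rw [ENNReal.ofReal_mul (by positivity : (0:ℝ) ≤ 2 * Real.exp (-v)),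
              ENNReal.ofReal_mul (by norm_num : (0:ℝ) ≤ 2), ENNReal.ofReal_ofNat]
        _ ≤ ENNReal.ofReal (8 * C₁ * ψ lam * Real.exp (-(v/2))) := by
            apply ENNReal.ofReal_le_ofReal
            have hkey : Real.exp (-v) * (Real.exp 1 + 2*v) ≤ 4 * Real.exp (-(v/2)) := by
              have hb1 : Real.exp 1 + 2*v ≤ 4 * Real.exp (v/2) := by
                have := Real.add_one_le_exp (v/2)
                nlinarith
              calc Real.exp (-v) * (Real.exp 1 + 2*v) ≤ Real.exp (-v) * (4 * Real.exp (v/2)) := by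
                    apply mul_le_mul_of_nonneg_left hb1 (Real.exp_pos _).le
                _ = 4 * Real.exp (-(v/2)) := by
                    rw [mul_comm (Real.exp (-v)), mul_assoc, ← Real.exp_add,
                      show v/2 + -v = -(v/2) by ring]
            nlinarith [hC₁pos.le, hψlam0, Real.exp_pos (-(v/2)), Real.exp_pos (-v),
              mul_le_mul_of_nonneg_left hkey (mul_nonneg hC₁pos.le hψlam0)]
    -- total
    have h4 : (∫⁻ v in Set.Ioi (0:ℝ), ENNReal.ofReal (8 * C₁ * ψ lam * Real.exp (-(v/2))))
        = ENNReal.ofReal (16 * C₁ * ψ lam) := by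
      have : ∀ v : ℝ, ENNReal.ofReal (8 * C₁ * ψ lam * Real.exp (-(v/2)))
          = ENNReal.ofReal (8 * C₁ * ψ lam) * ENNReal.ofReal (Real.exp (-(v/2))) := by
        intro v
        rw [← ENNReal.ofReal_mul (by positivity)]
      have hm : Measurable fun v : ℝ => ENNReal.ofReal (Real.exp (-(v/2))) := by
        apply Measurable.ennreal_ofReal
        exact Real.measurable_exp.comp ((measurable_id.div_const 2).neg)
      rw [lintegral_congr this, lintegral_const_mul'' _ hm.aemeasurable,
        lint_exp_half, ← ENNReal.ofReal_mul (by positivity)]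
      congr 1
      ring
    refine h1.trans ?_
    rw [h2]
    refine h3.trans ?_
    rw [h4]
    apply ENNReal.ofReal_le_ofReal
    exact mul_le_mul_of_nonneg_right (le_max_right Cs (16*C₁)) hψlam0
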